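/- Power sums are determined by the first elementary symmetric functions (§13–§14): Let R be a commutative ring, let k ≥ 1, and let s and t be multisets of elements of R with card s ≥ k and card t ≥ k. If e_i(s) = e_i(t) for all i with 1 ≤ i ≤ k, then p_j(s) = p_j(t) for all j with 1 ≤ j ≤ k. (Euler uses this for the auxiliary equations x - A = 0, x² - Ax + B = 0, x³ - Ax² + Bx - C = 0, etc., formed from the leading coefficients of a given equation: their roots p, q, r, s satisfy ∫α = ∫s = ∫r = ∫q = ∫p, ∫α² = ∫s² = ∫r² = ∫q², ∫α³ = ∫s³ = ∫r³, ∫α⁴ = ∫s⁴.) -/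

import Mathlib

/-- The `k`-th power sum of a multiset `s`: the sum of the `k`-th powers of its elements. -/
def Multiset.psum {R : Type*} [CommRing R] (s : Multiset R) (k : ℕ) : R :=
  (s.map (· ^ k)).sum

open Finset in
lemma multiset_exists_fn {R : Type*} (s : Multiset R) :
    ∃ n, ∃ f : Fin n → R, (Finset.univ.val.map f) = s := by
  obtain ⟨l, rfl⟩ : ∃ l : List R, (l : Multiset R) = s := ⟨s.toList, s.coe_toList⟩
  refine ⟨l.length, l.get, ?_⟩
  simp only [Finset.univ, Fintype.elems, Fin.fintype, Multiset.map_coe]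
  exact congrArg _ (List.map_get_finRange l)

open Finset MvPolynomial in
lemma multiset_newton {R : Type*} [CommRing R] (s : Multiset R) (j : ℕ) (h : 0 < j) :
    s.psum j = (-1) ^ (j + 1) * j * s.esymm j -
      ∑ a ∈ (antidiagonal j).filter (fun a => a.1 ∈ Set.Ioo 0 j),
        (-1) ^ a.1 * s.esymm a.1 * s.psum a.2 := by
  obtain ⟨m, f, hf⟩ := multiset_exists_fn s
  subst hf
  have key := congrArg (MvPolynomial.aeval f) (psum_eq_mul_esymm_sub_sum (Fin m) ℤ j h)
  have haevalp : ∀ n, MvPolynomial.aeval f (psum (Fin m) ℤ n) =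
      (Finset.univ.val.map f).psum n := by
    intro n
    rw [psum, map_sum]
    simp only [map_pow, aeval_X]
    rw [Multiset.psum, Multiset.map_map]
    rfl
  have haevale : ∀ n, MvPolynomial.aeval f (esymm (Fin m) ℤ n) =
      (Finset.univ.val.map f).esymm n := by
    intro n
    rw [aeval_esymm_eq_multiset_esymm]
  rw [map_sub, map_mul, map_mul, map_pow, map_neg, map_one, map_natCast, map_sum] at key
  simp only [map_mul, map_pow, map_neg, map_one, haevalp, haevale] at key
  exact key

/-- Power sums are determined by the first elementary symmetric functions (§13–§14):
if two multisets `s, t`, each of cardinality at least `k ≥ 1`, have the same elementary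
symmetric functions `e_i` for `1 ≤ i ≤ k`, then they have the same power sums `p_j`
for `1 ≤ j ≤ k`. -/
theorem psum_eq_of_esymm_eq {R : Type*} [CommRing R] (k : ℕ) (hk : 1 ≤ k)
    (s t : Multiset R) (hs : k ≤ Multiset.card s) (ht : k ≤ Multiset.card t)
    (he : ∀ i, 1 ≤ i → i ≤ k → s.esymm i = t.esymm i) :
    ∀ j, 1 ≤ j → j ≤ k → s.psum j = t.psum j := by
  intro j
  induction j using Nat.strong_induction_on with
  | _ j ih =>
    intro hj1 hjk
    rw [multiset_newton s j hj1, multiset_newton t j hj1,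
      he j hj1 hjk]
    congr 1
    apply Finset.sum_congr rfl
    intro a ha
    simp only [Finset.mem_filter, Finset.HasAntidiagonal.mem_antidiagonal, Set.mem_Ioo] at ha
    obtain ⟨hsum, h0, hlt⟩ := ha
    have ha2 : a.2 = j - a.1 := by omega
    rw [he a.1 h0 (by omega), ih a.2 (by omega) (by omega) (by omega)]
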